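/- arXiv:2010.06464 — 2 statements merged into one kernel-verified Lean document; each statement's English description precedes it below -/
import Mathlib

section
/- Let G be a simple graph with vertex set V, and let a group Γ act on V by graph automorphisms of G. Fix a vertex v₀ ∈ V and a subset X ⊆ Γ that generates Γ. Suppose that (i) for every vertex v ∈ V there exists g ∈ Γ such that v and g • v₀ are joined by a walk in G, and (ii) for every g ∈ X ∪ X⁻¹, the vertices v₀ and g • v₀ are joined by a walk in G. Then the graph G is connected. -/
/-- **Putman's trick** (Lemma 2.12 of the paper). Let a group `Γ` act on the vertex
set `V` of a simple graph `G` by graph automorphisms. Fix a base vertex `v₀` and a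
generating set `X ⊆ Γ`. If every vertex is reachable from some `Γ`-translate of `v₀`,
and `v₀` is reachable from `g • v₀` for every `g ∈ X ∪ X⁻¹`, then `G` is connected. -/
theorem putman_trick {V : Type*} {Γ : Type*} [Group Γ] [MulAction Γ V]
    (G : SimpleGraph V)
    (h_aut : ∀ (g : Γ) (u v : V), G.Adj u v ↔ G.Adj (g • u) (g • v))
    (v₀ : V) (X : Set Γ) (h_gen : Subgroup.closure X = ⊤)
    (h_orbit : ∀ v : V, ∃ g : Γ, G.Reachable v (g • v₀))
    (h_edge : ∀ g ∈ X ∪ X⁻¹, G.Reachable v₀ (g • v₀)) :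
    G.Connected := by
  -- translation preserves reachability
  have hmap : ∀ (g : Γ) (u v : V), G.Reachable u v → G.Reachable (g • u) (g • v) := by
    intro g u v h
    exact h.map (SimpleGraph.Iso.toHom ⟨MulAction.toPerm g, fun {a b} => (h_aut g a b).symm⟩)
  have key : ∀ g : Γ, G.Reachable v₀ (g • v₀) := by
    intro g
    have hg : g ∈ Subgroup.closure X := h_gen ▸ Subgroup.mem_top g
    induction hg using Subgroup.closure_induction with
    | mem x hx => exact h_edge x (Or.inl hx)
    | one => simpa using SimpleGraph.Reachable.refl v₀
    | mul a b _ _ ha hb =>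
        refine ha.trans ?_
        simpa [mul_smul] using hmap a _ _ hb
    | inv a _ ha =>
        have := hmap a⁻¹ _ _ ha
        simpa using this.symm
  have hall : ∀ v : V, G.Reachable v v₀ := by
    intro v
    obtain ⟨g, hg⟩ := h_orbit v
    exact hg.trans (key g).symm
  have : Nonempty V := ⟨v₀⟩
  exact SimpleGraph.Connected.mk fun u v => (hall u).trans (hall v).symm
end

section
/- Let G be a simple graph with vertex set V, and let a group Γ act on V by graph automorphisms of G. Fix a vertex v₀ ∈ V and a subset X ⊆ Γ that generates Γ. If for every g ∈ X ∪ X⁻¹ the vertices v₀ and g • v₀ are joined by a walk in G, then for every element g ∈ Γ the vertices v₀ and g • v₀ are joined by a walk in G. -/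
/-- The key inductive step in Putman's trick: if a group `Γ` acts on the vertex set of
a simple graph `G` by graph automorphisms, `X` generates `Γ`, and the base vertex `v₀`
is reachable from `g • v₀` for every `g ∈ X ∪ X⁻¹`, then `v₀` is reachable from
`g • v₀` for every `g ∈ Γ`. -/
theorem putman_trick_orbit_reachable {V : Type*} {Γ : Type*} [Group Γ] [MulAction Γ V]
    (G : SimpleGraph V)
    (h_aut : ∀ (g : Γ) (u v : V), G.Adj u v ↔ G.Adj (g • u) (g • v))
    (v₀ : V) (X : Set Γ) (h_gen : Subgroup.closure X = ⊤)
    (h_edge : ∀ g ∈ X ∪ X⁻¹, G.Reachable v₀ (g • v₀)) :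
    ∀ g : Γ, G.Reachable v₀ (g • v₀) := by
  have key : ∀ (g : Γ) (u v : V), G.Reachable u v → G.Reachable (g • u) (g • v) := by
    intro g u v h
    obtain ⟨w⟩ := h
    induction w with
    | nil => exact .refl _
    | cons a _ ih => exact ((h_aut g _ _).mp a).toWalk.reachable.trans ih
  intro g
  have hg : g ∈ Subgroup.closure X := h_gen ▸ Subgroup.mem_top g
  induction hg using Subgroup.closure_induction with
  | mem x hx => exact h_edge x (Or.inl hx)
  | one => simpa using SimpleGraph.Reachable.refl v₀
  | mul a b _ _ ha hb =>
      refine ha.trans ?_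
      have := key a _ _ hb
      simpa [mul_smul] using this
  | inv a ha hia =>
      have h1 : G.Reachable v₀ (a⁻¹ • v₀) := by
        by_cases hx : a ∈ X
        · exact h_edge a⁻¹ (Or.inr (by simpa using hx))
        · have := key a⁻¹ _ _ hia
          simpa using this.symm
      exact h1
end
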